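/- Let s ∈ (0,1) be irrational. Then s is oddly even, i.e. ⌊1/γ^{2j}(s)⌋ is even for every integer j ≥ 0 (equivalently, in the continued fraction expansion s = [0; a₁, a₂, a₃, …], the partial quotient a_k is even for every odd index k), if and only if Rᵏ(s) ∈ (0, 1/2) for every integer k ≥ 0. -/

import Mathlib

/-- The renormalization map `R : (0,1) → [0,1)`: `R(x) = 1 − x` if `x ≥ 1/2`, and
`R(x) = 1/(2x) − ⌊1/(2x)⌋` if `x < 1/2`. -/
noncomputable def Rmap (x : ℝ) : ℝ :=
  if x < 1/2 then 1 / (2 * x) - ⌊1 / (2 * x)⌋ else 1 - x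

/-- The Gauss map `γ(x) = 1/x − ⌊1/x⌋`. -/
noncomputable def gaussMap (x : ℝ) : ℝ := 1 / x - ⌊1 / x⌋

lemma gauss_basic {s : ℝ} (hs : s ∈ Set.Ioo (0:ℝ) 1) (h : Irrational s) :
    gaussMap s ∈ Set.Ioo (0:ℝ) 1 ∧ Irrational (gaussMap s) := by
  have h1 : Irrational (1 / s) := by rw [one_div]; exact h.inv
  have h2 : Irrational (gaussMap s) := h1.sub_intCast _
  have hfr : gaussMap s = Int.fract (1/s) := rfl
  have h0 : (0:ℝ) ≤ gaussMap s := by rw [hfr]; exact Int.fract_nonneg _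
  have hne : gaussMap s ≠ 0 := by simpa using h2.ne_int 0
  refine ⟨⟨lt_of_le_of_ne h0 (Ne.symm hne), ?_⟩, h2⟩
  rw [hfr]; exact Int.fract_lt_one _

lemma one_div_irr {s : ℝ} (h : Irrational s) : Irrational (1 / s) := by
  rw [one_div]; exact h.inv

/-- In the even case, `R(s) = γ(s)/2`. -/
lemma key_even {s : ℝ} (hs0 : 0 < s) (hs : s < 1/2)
    (hg : gaussMap s ∈ Set.Ioo (0:ℝ) 1) (m : ℤ) (hm : ⌊1/s⌋ = 2*m) :
    Rmap s = gaussMap s / 2 := by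
  have hsne : s ≠ 0 := ne_of_gt hs0
  have h1 : (1:ℝ)/(2*s) = (m:ℝ) + gaussMap s / 2 := by
    have : gaussMap s = 1/s - ((2*m : ℤ) : ℝ) := by rw [gaussMap, hm]
    rw [this]; push_cast; field_simp; ring
  have hfl : ⌊(1:ℝ)/(2*s)⌋ = m := by
    rw [h1, Int.floor_intCast_add, Int.floor_eq_zero_iff.2, add_zero]
    constructor
    · linarith [hg.1]
    · simpa using by linarith [hg.2]
  rw [Rmap, if_pos hs, hfl, h1]; push_cast; ring

/-- In the odd case, `R(s) = (1 + γ(s))/2 ≥ 1/2`. -/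
lemma key_odd {s : ℝ} (hs0 : 0 < s) (hs : s < 1/2)
    (hg : gaussMap s ∈ Set.Ioo (0:ℝ) 1) (m : ℤ) (hm : ⌊1/s⌋ = 2*m+1) :
    (1:ℝ)/2 ≤ Rmap s := by
  have hsne : s ≠ 0 := ne_of_gt hs0
  have h1 : (1:ℝ)/(2*s) = (m:ℝ) + (1 + gaussMap s) / 2 := by
    have : gaussMap s = 1/s - ((2*m+1 : ℤ) : ℝ) := by rw [gaussMap, hm]
    rw [this]; push_cast; field_simp; ring
  have hfl : ⌊(1:ℝ)/(2*s)⌋ = m := by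
    rw [h1, Int.floor_intCast_add, Int.floor_eq_zero_iff.2, add_zero]
    constructor
    · linarith [hg.1]
    · simpa using by linarith [hg.2]
  rw [Rmap, if_pos hs, hfl, h1]
  push_cast
  linarith [hg.1]

/-- The main step in the even case. -/
lemma step {s : ℝ} (hs : s ∈ Set.Ioo (0:ℝ) 1) (hirr : Irrational s)
    (he : Even ⌊1/s⌋) :
    s < 1/2 ∧ Rmap s = gaussMap s / 2 ∧ Rmap^[2] s = gaussMap^[2] s := by
  obtain ⟨hg, hgirr⟩ := gauss_basic hs hirr
  have h1s : 1 < 1/s := by rw [lt_div_iff₀ hs.1]; linarith [hs.2]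
  have ha1 : 1 ≤ ⌊1/s⌋ := Int.le_floor.2 (by exact_mod_cast h1s.le)
  obtain ⟨m, hm⟩ := he
  have hm' : ⌊1/s⌋ = 2*m := by omega
  have hm1 : 1 ≤ m := by omega
  have h2s : (2:ℝ) < 1/s := by
    have hle : ((2*m : ℤ):ℝ) ≤ 1/s := hm' ▸ Int.floor_le (1/s)
    push_cast at hle
    have hmr : (1:ℝ) ≤ (m:ℝ) := by exact_mod_cast hm1
    have hne : (1:ℝ)/s ≠ (2:ℝ) := by simpa using (one_div_irr hirr).ne_int 2
    exact lt_of_le_of_ne (by linarith) (Ne.symm hne)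
  have hhalf : s < 1/2 := by
    rw [lt_div_iff₀ hs.1] at h2s; linarith
  have hR1 : Rmap s = gaussMap s / 2 := key_even hs.1 hhalf hg m hm'
  refine ⟨hhalf, hR1, ?_⟩
  have hR2 : Rmap (gaussMap s / 2) = gaussMap (gaussMap s) := by
    rw [Rmap, if_pos (by linarith [hg.2])]
    rw [show 2 * (gaussMap s / 2) = gaussMap s by ring]
    rfl
  calc Rmap^[2] s = Rmap (Rmap s) := rfl
    _ = gaussMap (gaussMap s) := by rw [hR1, hR2]
    _ = gaussMap^[2] s := rfl

/-- If the orbit stays in `(0,1/2)`, the first partial quotient is even. -/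
lemma base_even {s : ℝ} (hs : s ∈ Set.Ioo (0:ℝ) 1) (hirr : Irrational s)
    (h : ∀ k : ℕ, Rmap^[k] s ∈ Set.Ioo (0 : ℝ) (1/2)) : Even ⌊1/s⌋ := by
  obtain ⟨hg, hgirr⟩ := gauss_basic hs hirr
  have hhalf : s < 1/2 := by
    have := (h 0).2; simpa using this
  by_contra hodd
  rw [Int.not_even_iff_odd] at hodd
  obtain ⟨m, hm⟩ := hodd
  have hge := key_odd hs.1 hhalf hg m hm
  have h1 := (h 1).2
  rw [Function.iterate_one] at h1
  linarith

lemma fwd : ∀ k : ℕ, ∀ s : ℝ, s ∈ Set.Ioo (0:ℝ) 1 → Irrational s →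
    (∀ j : ℕ, Even ⌊1 / gaussMap^[2*j] s⌋) → Rmap^[k] s ∈ Set.Ioo (0:ℝ) (1/2) := by
  intro k
  induction k using Nat.strong_induction_on with
  | _ k ih =>
    intro s hs hirr h
    have h0 : Even ⌊1/s⌋ := by simpa using h 0
    obtain ⟨hhalf, hR1, hR2⟩ := step hs hirr h0
    obtain ⟨hg, hgirr⟩ := gauss_basic hs hirr
    match k with
    | 0 => exact ⟨hs.1, hhalf⟩
    | 1 =>
      rw [Function.iterate_one, hR1]
      exact ⟨by linarith [hg.1], by linarith [hg.2]⟩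
    | (n+2) =>
      have hiter : Rmap^[n+2] s = Rmap^[n] (gaussMap^[2] s) := by
        rw [Function.iterate_add_apply, hR2]
      rw [hiter]
      obtain ⟨hg2, hg2irr⟩ := gauss_basic hg hgirr
      refine ih n (by omega) _ hg2 hg2irr ?_
      intro j
      have := h (j+1)
      rwa [show 2*(j+1) = 2*j + 2 by ring, Function.iterate_add_apply] at this

lemma bwd : ∀ j : ℕ, ∀ s : ℝ, s ∈ Set.Ioo (0:ℝ) 1 → Irrational s →
    (∀ k : ℕ, Rmap^[k] s ∈ Set.Ioo (0 : ℝ) (1/2)) → Even ⌊1 / gaussMap^[2*j] s⌋ := by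
  intro j
  induction j with
  | zero =>
    intro s hs hirr h
    simpa using base_even hs hirr h
  | succ j ih =>
    intro s hs hirr h
    have h0 : Even ⌊1/s⌋ := base_even hs hirr h
    obtain ⟨hhalf, hR1, hR2⟩ := step hs hirr h0
    obtain ⟨hg, hgirr⟩ := gauss_basic hs hirr
    obtain ⟨hg2, hg2irr⟩ := gauss_basic hg hgirr
    have hshift : ∀ k : ℕ, Rmap^[k] (gaussMap^[2] s) ∈ Set.Ioo (0 : ℝ) (1/2) := by
      intro k
      have := h (k+2)
      rwa [Function.iterate_add_apply, hR2] at this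
    have := ih (gaussMap^[2] s) hg2 hg2irr hshift
    rwa [show 2*(j+1) = 2*j + 2 by ring, Function.iterate_add_apply]

/-- An irrational `s ∈ (0,1)` is *oddly even* (every odd-indexed partial
quotient of its continued fraction is even, i.e. `⌊1/γ^{2j}(s)⌋` is even for all `j ≥ 0`)
if and only if `Rᵏ(s) ∈ (0, 1/2)` for every `k ≥ 0`. -/
theorem oddly_even_iff_R_orbit_below_half (s : ℝ) (hs : s ∈ Set.Ioo (0 : ℝ) 1)
    (hirr : Irrational s) :
    (∀ j : ℕ, Even ⌊1 / gaussMap^[2 * j] s⌋) ↔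
      (∀ k : ℕ, Rmap^[k] s ∈ Set.Ioo (0 : ℝ) (1/2)) := by
  constructor
  · intro h k; exact fwd k s hs hirr h
  · intro h j; exact bwd j s hs hirr h
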